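/- Let β ∈ [0,1] and assume U satisfies A1(β) and is twice continuously differentiable. Let T ∈ ℕ* and let h̃_T > 0 be as in the irreducibility theorem for the HMC kernel. Then for all h ∈ (0,h̃_T] and every compact set B ⊂ ℝ^d, there exists ε > 0 such that for all q ∈ B and all Borel sets A ⊆ B: P_{h,T}(q,A) ≥ ε Leb(A); that is, every compact set is a small set for the HMC kernel. -/

import Mathlib

open Real MeasureTheory Filter
open Pointwise
noncomputable section
set_option maxHeartbeats 1000000

/-- One leapfrog (Störmer–Verlet) step for the potential `U` with step size `h`. -/
def leapfrog {d : ℕ} (U : EuclideanSpace ℝ (Fin d) → ℝ) (h : ℝ)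
    (x : EuclideanSpace ℝ (Fin d) × EuclideanSpace ℝ (Fin d)) :
    EuclideanSpace ℝ (Fin d) × EuclideanSpace ℝ (Fin d) :=
  let p2 := x.2 - (h / 2) • gradient U x.1
  let q' := x.1 + h • p2
  (q', p2 - (h / 2) • gradient U q')

/-- The Hamiltonian `H(q,p) = U(q) + ‖p‖²/2`. -/
def hamiltonian {d : ℕ} (U : EuclideanSpace ℝ (Fin d) → ℝ)
    (x : EuclideanSpace ℝ (Fin d) × EuclideanSpace ℝ (Fin d)) : ℝ :=
  U x.1 + ‖x.2‖ ^ 2 / 2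

/-- Acceptance probability `α(x,y) = min(1, exp(H(x) − H(y)))`. -/
def hmcAccept {d : ℕ} (U : EuclideanSpace ℝ (Fin d) → ℝ)
    (x y : EuclideanSpace ℝ (Fin d) × EuclideanSpace ℝ (Fin d)) : ℝ :=
  min 1 (Real.exp (hamiltonian U x - hamiltonian U y))

/-- The HMC Markov kernel `P_{h,T}(q, ·)`, as a measure on `ℝ^d`. -/
def hmcP {d : ℕ} (U : EuclideanSpace ℝ (Fin d) → ℝ) (h : ℝ) (T : ℕ)
    (q : EuclideanSpace ℝ (Fin d)) : Measure (EuclideanSpace ℝ (Fin d)) :=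
  Measure.map (fun p => ((leapfrog U h)^[T] (q, p)).1)
    (volume.withDensity fun p => ENNReal.ofReal
      ((2 * π) ^ (-(d : ℝ) / 2) * hmcAccept U (q, p) ((leapfrog U h)^[T] (q, p)) *
        Real.exp (-‖p‖ ^ 2 / 2))) +
  ENNReal.ofReal ((2 * π) ^ (-(d : ℝ) / 2) *
      ∫ p, (1 - hmcAccept U (q, p) ((leapfrog U h)^[T] (q, p))) *
        Real.exp (-‖p‖ ^ 2 / 2)) • Measure.dirac q

section AuxHMC
variable {d : ℕ} {U : EuclideanSpace ℝ (Fin d) → ℝ} {L₁ h : ℝ}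

lemma smul_norm_eq (c : ℝ) (hc : 0 ≤ c) (v : EuclideanSpace ℝ (Fin d)) :
    ‖c • v‖ = c * ‖v‖ := by rw [norm_smul, Real.norm_eq_abs, abs_of_nonneg hc]

lemma leapfrog_fst (x : EuclideanSpace ℝ (Fin d) × EuclideanSpace ℝ (Fin d)) :
    (leapfrog U h x).1 = x.1 + h • (x.2 - (h/2) • gradient U x.1) := rfl

lemma leapfrog_snd (x : EuclideanSpace ℝ (Fin d) × EuclideanSpace ℝ (Fin d)) :
    (leapfrog U h x).2 = (x.2 - (h/2) • gradient U x.1)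
      - (h/2) • gradient U ((leapfrog U h x).1) := rfl

lemma step_P (hL₁ : 0 ≤ L₁)
    (hLip : ∀ q q' : EuclideanSpace ℝ (Fin d),
      ‖gradient U q - gradient U q'‖ ≤ L₁ * ‖q - q'‖)
    (hh0 : 0 ≤ h) (x y : EuclideanSpace ℝ (Fin d) × EuclideanSpace ℝ (Fin d)) :
    ‖(x.2 - (h/2) • gradient U x.1) - (y.2 - (h/2) • gradient U y.1)‖
      ≤ ‖x.2 - y.2‖ + h/2 * (L₁ * ‖x.1 - y.1‖) := by
  have hid : (x.2 - (h/2) • gradient U x.1) - (y.2 - (h/2) • gradient U y.1)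
      = (x.2 - y.2) - (h/2) • (gradient U x.1 - gradient U y.1) := by module
  rw [hid]
  refine (norm_sub_le _ _).trans ?_
  rw [smul_norm_eq _ (by linarith)]
  have := hLip x.1 y.1
  nlinarith [norm_nonneg (gradient U x.1 - gradient U y.1)]

lemma step_pair (hL₁ : 0 ≤ L₁)
    (hLip : ∀ q q' : EuclideanSpace ℝ (Fin d),
      ‖gradient U q - gradient U q'‖ ≤ L₁ * ‖q - q'‖)
    (hh0 : 0 ≤ h) (hh1 : h ≤ 1) (hhL : h * L₁ ≤ 1)
    (x y : EuclideanSpace ℝ (Fin d) × EuclideanSpace ℝ (Fin d)) :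
    ‖(leapfrog U h x).1 - (leapfrog U h y).1‖ + ‖(leapfrog U h x).2 - (leapfrog U h y).2‖
      ≤ (3 + 2*L₁) * (‖x.1 - y.1‖ + ‖x.2 - y.2‖) := by
  have hP := step_P hL₁ hLip hh0 x y
  have hq : ‖(leapfrog U h x).1 - (leapfrog U h y).1‖
      ≤ ‖x.1 - y.1‖ + h * ‖(x.2 - (h/2) • gradient U x.1) - (y.2 - (h/2) • gradient U y.1)‖ := by
    rw [leapfrog_fst, leapfrog_fst]
    have hid : (x.1 + h • (x.2 - (h/2) • gradient U x.1)) - (y.1 + h • (y.2 - (h/2) • gradient U y.1))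
        = (x.1 - y.1) + h • ((x.2 - (h/2) • gradient U x.1) - (y.2 - (h/2) • gradient U y.1)) := by
      module
    rw [hid]
    refine (norm_add_le _ _).trans ?_
    rw [smul_norm_eq _ hh0]
  have hp : ‖(leapfrog U h x).2 - (leapfrog U h y).2‖
      ≤ ‖(x.2 - (h/2) • gradient U x.1) - (y.2 - (h/2) • gradient U y.1)‖
        + h/2 * (L₁ * ‖(leapfrog U h x).1 - (leapfrog U h y).1‖) := by
    rw [leapfrog_snd, leapfrog_snd]
    have hid : ((x.2 - (h/2) • gradient U x.1) - (h/2) • gradient U ((leapfrog U h x).1))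
        - ((y.2 - (h/2) • gradient U y.1) - (h/2) • gradient U ((leapfrog U h y).1))
        = ((x.2 - (h/2) • gradient U x.1) - (y.2 - (h/2) • gradient U y.1))
          - (h/2) • (gradient U ((leapfrog U h x).1) - gradient U ((leapfrog U h y).1)) := by
      module
    rw [hid]
    refine (norm_sub_le _ _).trans ?_
    rw [smul_norm_eq _ (by linarith)]
    have := hLip (leapfrog U h x).1 (leapfrog U h y).1
    nlinarith [norm_nonneg (gradient U ((leapfrog U h x).1) - gradient U ((leapfrog U h y).1))]
  -- abstract to reals
  set a := ‖x.1 - y.1‖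
  set b := ‖x.2 - y.2‖
  set m := ‖(x.2 - (h/2) • gradient U x.1) - (y.2 - (h/2) • gradient U y.1)‖
  set A := ‖(leapfrog U h x).1 - (leapfrog U h y).1‖
  set Bp := ‖(leapfrog U h x).2 - (leapfrog U h y).2‖
  have ha : 0 ≤ a := norm_nonneg _
  have hb : 0 ≤ b := norm_nonneg _
  have hm : 0 ≤ m := norm_nonneg _
  have hA : 0 ≤ A := norm_nonneg _
  nlinarith [mul_le_mul_of_nonneg_left hP hh0,
    mul_le_mul_of_nonneg_left hq (mul_nonneg (by linarith : (0:ℝ) ≤ h/2) hL₁),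
    mul_le_mul_of_nonneg_left hP (mul_nonneg (mul_nonneg (by linarith : (0:ℝ) ≤ h/2) hL₁) hh0),
    mul_nonneg ha hL₁, mul_nonneg hb hL₁, mul_nonneg hm hL₁]

lemma traj_bound (hL₁ : 0 ≤ L₁)
    (hLip : ∀ q q' : EuclideanSpace ℝ (Fin d),
      ‖gradient U q - gradient U q'‖ ≤ L₁ * ‖q - q'‖)
    (hh0 : 0 ≤ h) (hh1 : h ≤ 1) (hhL : h * L₁ ≤ 1)
    (q p p' : EuclideanSpace ℝ (Fin d)) : ∀ k : ℕ,
    ‖((leapfrog U h)^[k] (q,p)).1 - ((leapfrog U h)^[k] (q,p')).1‖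
      + ‖((leapfrog U h)^[k] (q,p)).2 - ((leapfrog U h)^[k] (q,p')).2‖
      ≤ (3 + 2*L₁)^k * ‖p - p'‖ := by
  intro k
  induction k with
  | zero => simp
  | succ k ih =>
    rw [Function.iterate_succ_apply', Function.iterate_succ_apply']
    calc _ ≤ (3 + 2*L₁) * (‖((leapfrog U h)^[k] (q,p)).1 - ((leapfrog U h)^[k] (q,p')).1‖
          + ‖((leapfrog U h)^[k] (q,p)).2 - ((leapfrog U h)^[k] (q,p')).2‖) :=
        step_pair hL₁ hLip hh0 hh1 hhL _ _
      _ ≤ (3 + 2*L₁) * ((3 + 2*L₁)^k * ‖p - p'‖) :=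
        mul_le_mul_of_nonneg_left ih (by linarith)
      _ = (3 + 2*L₁)^(k+1) * ‖p - p'‖ := by ring

lemma alg2 {c : ℝ} (a b ga gb gqa gqb dp : EuclideanSpace ℝ (Fin d)) :
    ((a - c • ga) - c • gqa) - ((b - c • gb) - c • gqb) - dp
      = (a - b - dp) - c • (ga - gb) - c • (gqa - gqb) := by module

lemma dev_bound (hL₁ : 0 ≤ L₁)
    (hLip : ∀ q q' : EuclideanSpace ℝ (Fin d),
      ‖gradient U q - gradient U q'‖ ≤ L₁ * ‖q - q'‖)
    (hh0 : 0 ≤ h) (hh1 : h ≤ 1) (hhL : h * L₁ ≤ 1)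
    (q p p' : EuclideanSpace ℝ (Fin d)) : ∀ k : ℕ,
    ‖((leapfrog U h)^[k] (q,p)).1 - ((leapfrog U h)^[k] (q,p')).1 - ((k:ℝ)*h) • (p - p')‖
      ≤ L₁ * (3 + 2*L₁)^k * (k:ℝ)^2 * (h^2 * ‖p - p'‖)
    ∧ ‖((leapfrog U h)^[k] (q,p)).2 - ((leapfrog U h)^[k] (q,p')).2 - (p - p')‖
      ≤ L₁ * (3 + 2*L₁)^k * (k:ℝ) * (h * ‖p - p'‖) := by
  intro k
  induction k with
  | zero => simp
  | succ k ih =>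
    obtain ⟨ihu, ihw⟩ := ih
    set x := (leapfrog U h)^[k] (q,p) with hxdef
    set y := (leapfrog U h)^[k] (q,p') with hydef
    have hM : (1:ℝ) ≤ 3 + 2*L₁ := by linarith
    have hMk : (0:ℝ) ≤ (3 + 2*L₁)^k := by positivity
    have hMk1 : (3 + 2*L₁)^k ≤ (3 + 2*L₁)^(k+1) := by
      calc (3 + 2*L₁)^k = 1 * (3 + 2*L₁)^k := by ring
        _ ≤ (3 + 2*L₁) * (3 + 2*L₁)^k := by
            apply mul_le_mul_of_nonneg_right hM hMk
        _ = (3 + 2*L₁)^(k+1) := by ring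
    have hD : (0:ℝ) ≤ ‖p - p'‖ := norm_nonneg _
    -- trajectory bounds at k and k+1
    have htk := traj_bound hL₁ hLip hh0 hh1 hhL q p p' k
    have htk1 := traj_bound hL₁ hLip hh0 hh1 hhL q p p' (k+1)
    rw [Function.iterate_succ_apply', Function.iterate_succ_apply'] at htk1 ⊢
    have hgx : ‖gradient U x.1 - gradient U y.1‖ ≤ L₁ * ((3 + 2*L₁)^k * ‖p - p'‖) := by
      refine (hLip x.1 y.1).trans ?_
      have h1 : ‖x.1 - y.1‖ ≤ (3 + 2*L₁)^k * ‖p - p'‖ := by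
        have := norm_nonneg (x.2 - y.2); linarith [htk]
      exact mul_le_mul_of_nonneg_left h1 hL₁
    have hgq : ‖gradient U (leapfrog U h x).1 - gradient U (leapfrog U h y).1‖
        ≤ L₁ * ((3 + 2*L₁)^(k+1) * ‖p - p'‖) := by
      refine (hLip _ _).trans ?_
      have h1 : ‖(leapfrog U h x).1 - (leapfrog U h y).1‖ ≤ (3 + 2*L₁)^(k+1) * ‖p - p'‖ := by
        have := norm_nonneg ((leapfrog U h x).2 - (leapfrog U h y).2); linarith [htk1]
      exact mul_le_mul_of_nonneg_left h1 hL₁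
    constructor
    · have hid : (leapfrog U h x).1 - (leapfrog U h y).1 - (((k:ℕ)+1:ℝ)*h) • (p - p')
          = (x.1 - y.1 - ((k:ℝ)*h) • (p - p'))
            + h • (x.2 - y.2 - (p - p'))
            - (h^2/2) • (gradient U x.1 - gradient U y.1) := by
        rw [leapfrog_fst, leapfrog_fst]; module
      push_cast
      rw [hid]
      have tri : ‖(x.1 - y.1 - ((k:ℝ)*h) • (p - p'))
            + h • (x.2 - y.2 - (p - p'))
            - (h^2/2) • (gradient U x.1 - gradient U y.1)‖
          ≤ ‖x.1 - y.1 - ((k:ℝ)*h) • (p - p')‖ + h * ‖x.2 - y.2 - (p - p')‖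
            + h^2/2 * ‖gradient U x.1 - gradient U y.1‖ := by
        refine (norm_sub_le _ _).trans ((add_le_add (norm_add_le _ _) le_rfl).trans ?_)
        rw [smul_norm_eq h hh0, smul_norm_eq (h^2/2) (by positivity)]
      refine tri.trans ?_
      nlinarith [ihu, mul_le_mul_of_nonneg_left ihw hh0,
        mul_le_mul_of_nonneg_left hgx (show (0:ℝ) ≤ h^2/2 by positivity),
        mul_le_mul_of_nonneg_left hMk1
          (show (0:ℝ) ≤ L₁*(((k:ℝ)+1)^2)*(h^2*‖p - p'‖) by positivity),
        mul_le_mul_of_nonneg_right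
          (show (k:ℝ)^2 + (k:ℝ) + 1/2 ≤ ((k:ℝ)+1)^2 by nlinarith [sq_nonneg ((k:ℝ))])
          (show (0:ℝ) ≤ L₁*(3 + 2*L₁)^k*(h^2*‖p - p'‖) by positivity)]
    · have hid : (leapfrog U h x).2 - (leapfrog U h y).2 - (p - p')
          = (x.2 - y.2 - (p - p'))
            - (h/2) • (gradient U x.1 - gradient U y.1)
            - (h/2) • (gradient U (leapfrog U h x).1 - gradient U (leapfrog U h y).1) := by
        rw [leapfrog_snd, leapfrog_snd]
        exact alg2 x.2 y.2 (gradient U x.1) (gradient U y.1)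
          (gradient U (leapfrog U h x).1) (gradient U (leapfrog U h y).1) (p - p')
      push_cast
      rw [hid]
      have tri : ‖(x.2 - y.2 - (p - p'))
            - (h/2) • (gradient U x.1 - gradient U y.1)
            - (h/2) • (gradient U (leapfrog U h x).1 - gradient U (leapfrog U h y).1)‖
          ≤ ‖x.2 - y.2 - (p - p')‖ + h/2 * ‖gradient U x.1 - gradient U y.1‖
            + h/2 * ‖gradient U (leapfrog U h x).1 - gradient U (leapfrog U h y).1‖ := by
        refine (norm_sub_le _ _).trans ((add_le_add (norm_sub_le _ _) le_rfl).trans ?_)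
        rw [smul_norm_eq _ (show (0:ℝ) ≤ h/2 by linarith),
          smul_norm_eq _ (show (0:ℝ) ≤ h/2 by linarith)]
      refine tri.trans ?_
      nlinarith [ihw, mul_le_mul_of_nonneg_left hgx (show (0:ℝ) ≤ h/2 by linarith),
        mul_le_mul_of_nonneg_left hgq (show (0:ℝ) ≤ h/2 by linarith),
        mul_le_mul_of_nonneg_left hMk1
          (show (0:ℝ) ≤ L₁*(k:ℝ)*(h*‖p - p'‖) by positivity),
        mul_le_mul_of_nonneg_left hMk1
          (show (0:ℝ) ≤ L₁*(h/2*‖p - p'‖) by positivity)]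

section main
variable {U : EuclideanSpace ℝ (Fin d) → ℝ} {L₁ h : ℝ}

lemma grad_cont (hL₁ : 0 ≤ L₁)
    (hLip : ∀ q q' : EuclideanSpace ℝ (Fin d),
      ‖gradient U q - gradient U q'‖ ≤ L₁ * ‖q - q'‖) :
    Continuous (gradient U) := by
  refine (LipschitzWith.of_dist_le_mul (K := ⟨L₁, hL₁⟩) ?_).continuous
  intro a b
  rw [dist_eq_norm, dist_eq_norm]; exact hLip a b

lemma leapfrog_cont (hL₁ : 0 ≤ L₁)
    (hLip : ∀ q q' : EuclideanSpace ℝ (Fin d),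
      ‖gradient U q - gradient U q'‖ ≤ L₁ * ‖q - q'‖) :
    Continuous (leapfrog U h) := by
  have hg := grad_cont hL₁ hLip
  unfold leapfrog
  fun_prop

end main
end AuxHMC

/-- under A1(β) with `U` twice continuously differentiable, for small
enough step sizes every compact set is a small set for the HMC kernel. -/
theorem hmc_compact_sets_small {d : ℕ}
    (U : EuclideanSpace ℝ (Fin d) → ℝ) (β : ℝ) (hβ : β ∈ Set.Icc (0 : ℝ) 1)
    (hU : ContDiff ℝ 2 U)
    (L₁ : ℝ) (hL₁ : 0 ≤ L₁)
    (hLip : ∀ q q' : EuclideanSpace ℝ (Fin d),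
      ‖gradient U q - gradient U q'‖ ≤ L₁ * ‖q - q'‖)
    (M₁ : ℝ) (hM₁ : 0 ≤ M₁)
    (hGrowth : ∀ q : EuclideanSpace ℝ (Fin d), ‖gradient U q‖ ≤ M₁ * (1 + ‖q‖ ^ β))
    (T : ℕ) (hT : 1 ≤ T) :
    ∃ h' > (0 : ℝ), ∀ h ∈ Set.Ioc (0 : ℝ) h',
      ∀ B : Set (EuclideanSpace ℝ (Fin d)), IsCompact B →
        ∃ ε > (0 : ℝ), ∀ q ∈ B, ∀ A : Set (EuclideanSpace ℝ (Fin d)),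
          A ⊆ B → MeasurableSet A →
          ENNReal.ofReal ε * volume A ≤ hmcP U h T q A := by
  classical
  -- get the threshold δ₀ from the Jacobian lemma
  have hdet : ENNReal.ofReal |(ContinuousLinearMap.id ℝ (EuclideanSpace ℝ (Fin d))).det| < ((2 : NNReal) : ENNReal) := by
    simp [ContinuousLinearMap.det]
  have hev := MeasureTheory.addHaar_image_le_mul_of_det_lt (volume : Measure (EuclideanSpace ℝ (Fin d)))
    (ContinuousLinearMap.id ℝ (EuclideanSpace ℝ (Fin d))) hdet
  obtain ⟨δ₀, hδ₀, hδ₀pos⟩ := (hev.and self_mem_nhdsWithin).exists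
  have hδ₀pos' : (0:ℝ) < (δ₀:ℝ) := hδ₀pos
  set C : ℝ := L₁ * (3 + 2*L₁)^T * (T:ℝ)^2 with hCdef
  have hC : 0 ≤ C := by positivity
  have hTpos : (0:ℝ) < (T:ℝ) := by exact_mod_cast hT
  set h' : ℝ := min 1 (min (1/(L₁+1)) (min ((δ₀:ℝ)*(T:ℝ)/(C+1)) ((T:ℝ)/(2*(C+1))))) with hh'def
  have hh'pos : 0 < h' := by
    refine lt_min one_pos (lt_min (by positivity) (lt_min (by positivity) (by positivity)))
  refine ⟨h', hh'pos, ?_⟩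
  rintro h ⟨hh0, hhle⟩ B hB
  have hh1 : h ≤ 1 := hhle.trans (min_le_left _ _)
  have hhL : h * L₁ ≤ 1 := by
    have h2 : h ≤ 1/(L₁+1) := hhle.trans ((min_le_right _ _).trans (min_le_left _ _))
    rw [le_div_iff₀ (by linarith)] at h2
    nlinarith
  have hhδ : C * h ≤ (δ₀:ℝ) * (T:ℝ) := by
    have h2 : h ≤ (δ₀:ℝ)*(T:ℝ)/(C+1) :=
      hhle.trans ((min_le_right _ _).trans ((min_le_right _ _).trans (min_le_left _ _)))
    rw [le_div_iff₀ (by linarith)] at h2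
    nlinarith
  have hhC : C * h ≤ (T:ℝ)/2 := by
    have h2 : h ≤ (T:ℝ)/(2*(C+1)) :=
      hhle.trans ((min_le_right _ _).trans ((min_le_right _ _).trans (min_le_right _ _)))
    rw [le_div_iff₀ (by positivity)] at h2
    nlinarith
  set Th : ℝ := (T:ℝ) * h with hThdef
  have hTh : 0 < Th := by positivity
  set F : EuclideanSpace ℝ (Fin d) → EuclideanSpace ℝ (Fin d) → EuclideanSpace ℝ (Fin d) := fun qq pp => ((leapfrog U h)^[T] (qq, pp)).1 with hFdef
  have key : ∀ qq pp pp' : EuclideanSpace ℝ (Fin d), ‖F qq pp - F qq pp' - Th • (pp - pp')‖ ≤ C*h^2*‖pp - pp'‖ := by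
    intro qq pp pp'
    have := (dev_bound hL₁ hLip hh0.le hh1 hhL qq pp pp' T).1
    calc ‖F qq pp - F qq pp' - Th • (pp - pp')‖
        = ‖((leapfrog U h)^[T] (qq,pp)).1 - ((leapfrog U h)^[T] (qq,pp')).1
            - ((T:ℝ)*h) • (pp - pp')‖ := rfl
      _ ≤ L₁ * (3 + 2*L₁)^T * (T:ℝ)^2 * (h^2 * ‖pp - pp'‖) := this
      _ = C*h^2*‖pp - pp'‖ := by rw [hCdef]; ring
  have hCh2 : C * h^2 ≤ Th/2 := by
    have := mul_le_mul_of_nonneg_right hhC hh0.le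
    calc C * h^2 = C * h * h := by ring
      _ ≤ (T:ℝ)/2 * h := this
      _ = Th/2 := by rw [hThdef]; ring
  have hratio : C * h^2 ≤ (δ₀:ℝ) * Th := by
    have := mul_le_mul_of_nonneg_right hhδ hh0.le
    calc C * h^2 = C * h * h := by ring
      _ ≤ (δ₀:ℝ) * (T:ℝ) * h := this
      _ = (δ₀:ℝ) * Th := by rw [hThdef]; ring
  -- surjectivity of F qq
  have Fsurj : ∀ qq y : EuclideanSpace ℝ (Fin d), ∃ pp, F qq pp = y := by
    intro qq y
    set g : EuclideanSpace ℝ (Fin d) → EuclideanSpace ℝ (Fin d) := fun pp => Th⁻¹ • (y - (F qq pp - Th • pp)) with hgdef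
    have hg : ∀ a b : EuclideanSpace ℝ (Fin d), dist (g a) (g b) ≤ (1/2) * dist a b := by
      intro a b
      have hid : g a - g b = Th⁻¹ • ((F qq b - F qq a) - Th • (b - a)) := by
        rw [hgdef]; module
      rw [dist_eq_norm, dist_eq_norm, hid,
        smul_norm_eq _ (by positivity : (0:ℝ) ≤ Th⁻¹)]
      have h1 := key qq b a
      have h2 : Th⁻¹ * (C*h^2) ≤ 1/2 := by
        rw [inv_mul_le_iff₀ hTh]
        linarith
      have h3 : ‖b - a‖ = ‖a - b‖ := norm_sub_rev _ _
      nlinarith [norm_nonneg (a - b), norm_nonneg ((F qq b - F qq a) - Th • (b - a)),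
        mul_le_mul_of_nonneg_left h1 (by positivity : (0:ℝ) ≤ Th⁻¹)]
    have hcontr : ContractingWith (1/2 : NNReal) g := by
      constructor
      · exact by rw [one_div]; exact two_inv_lt_one
      · apply LipschitzWith.of_dist_le_mul
        intro a b
        have := hg a b
        push_cast
        simpa using this
    refine ⟨hcontr.fixedPoint g, ?_⟩
    have hfix : g (ContractingWith.fixedPoint g hcontr) = ContractingWith.fixedPoint g hcontr :=
      hcontr.fixedPoint_isFixedPt
    set ps := ContractingWith.fixedPoint g hcontr
    have h6 : y - (F qq ps - Th • ps) = Th • ps := by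
      calc y - (F qq ps - Th • ps) = Th • (Th⁻¹ • (y - (F qq ps - Th • ps))) :=
            (smul_inv_smul₀ hTh.ne' _).symm
        _ = Th • ps := by rw [show Th⁻¹ • (y - (F qq ps - Th • ps)) = ps from hfix]
    have h7 : y = Th • ps + (F qq ps - Th • ps) := sub_eq_iff_eq_add.mp h6
    rw [h7]; abel
  -- continuity facts
  have hUc : Continuous U := hU.continuous
  have hlfc : Continuous (leapfrog U h) := leapfrog_cont hL₁ hLip
  have hitc : Continuous ((leapfrog U h)^[T]) := hlfc.iterate T
  have hFpair : Continuous (fun x : EuclideanSpace ℝ (Fin d) × EuclideanSpace ℝ (Fin d) =>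
      ((leapfrog U h)^[T] x).1) := continuous_fst.comp hitc
  -- empty case
  rcases B.eq_empty_or_nonempty with rfl | ⟨q₀, hq₀⟩
  · exact ⟨1, one_pos, fun q hq => absurd hq (by simp)⟩
  -- radius bounds
  obtain ⟨r0, hr0⟩ := hB.isBounded.subset_closedBall 0
  set r' : ℝ := max r0 0 with hr'def
  have hBr : B ⊆ Metric.closedBall 0 r' :=
    hr0.trans (Metric.closedBall_subset_closedBall (le_max_left _ _))
  have hr'nn : 0 ≤ r' := le_max_right _ _
  obtain ⟨r₂, hr₂⟩ := hB.exists_bound_of_continuousOn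
    (f := fun qq => F qq 0)
    ((hFpair.comp (continuous_id.prodMk continuous_const)).continuousOn)
  set r₂' : ℝ := max r₂ 0 with hr₂'def
  have hr₂'nn : 0 ≤ r₂' := le_max_right _ _
  set R : ℝ := 2*(r' + r₂')/Th with hRdef
  have hRnn : 0 ≤ R := div_nonneg (by linarith) hTh.le
  have hradius : ∀ qq ∈ B, ∀ pp : EuclideanSpace ℝ (Fin d), F qq pp ∈ B → ‖pp‖ ≤ R := by
    intro qq hqq pp hmem
    have hk := key qq pp 0
    rw [sub_zero] at hk
    have h1 : ‖Th • pp‖ - ‖F qq pp - F qq 0‖ ≤ ‖F qq pp - F qq 0 - Th • pp‖ :=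
      calc ‖Th • pp‖ - ‖F qq pp - F qq 0‖ ≤ ‖Th • pp - (F qq pp - F qq 0)‖ :=
            norm_sub_norm_le _ _
        _ = ‖F qq pp - F qq 0 - Th • pp‖ := norm_sub_rev _ _
    have hFb : ‖F qq pp‖ ≤ r' := mem_closedBall_zero_iff.mp (hBr hmem)
    have hF0 : ‖F qq 0‖ ≤ r₂' := (hr₂ qq hqq).trans (le_max_left _ _)
    have hsm : ‖Th • pp‖ = Th * ‖pp‖ := smul_norm_eq _ hTh.le _
    have htri : ‖F qq pp - F qq 0‖ ≤ r' + r₂' := (norm_sub_le _ _).trans (by linarith)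
    have h2 : Th/2 * ‖pp‖ ≤ r' + r₂' := by
      nlinarith [norm_nonneg pp, mul_le_mul_of_nonneg_right hCh2 (norm_nonneg pp)]
    rw [hRdef, le_div_iff₀ hTh]
    linarith
  -- maximum of the energy difference on the compact set
  have hHc : Continuous (hamiltonian U) := by
    unfold hamiltonian; fun_prop
  have hphic : Continuous (fun x : EuclideanSpace ℝ (Fin d) × EuclideanSpace ℝ (Fin d) =>
      hamiltonian U ((leapfrog U h)^[T] x) - hamiltonian U x) := (hHc.comp hitc).sub hHc
  have hSne : (B ×ˢ Metric.closedBall (0 : EuclideanSpace ℝ (Fin d)) R).Nonempty :=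
    ⟨(q₀, 0), hq₀, by simpa [Metric.mem_closedBall] using hRnn⟩
  obtain ⟨x₀, hx₀S, hx₀⟩ := (hB.prod (isCompact_closedBall _ _)).exists_isMaxOn hSne
    hphic.continuousOn
  set C₀ : ℝ := max (hamiltonian U ((leapfrog U h)^[T] x₀) - hamiltonian U x₀) 0 with hC₀def
  have hC₀nn : 0 ≤ C₀ := le_max_right _ _
  have haccept : ∀ qq ∈ B, ∀ pp : EuclideanSpace ℝ (Fin d), ‖pp‖ ≤ R →
      Real.exp (-C₀) ≤ hmcAccept U (qq, pp) ((leapfrog U h)^[T] (qq, pp)) := by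
    intro qq hqq pp hpp
    have hmemS : (qq, pp) ∈ B ×ˢ Metric.closedBall (0 : EuclideanSpace ℝ (Fin d)) R :=
      ⟨hqq, by simpa [Metric.mem_closedBall, dist_eq_norm] using hpp⟩
    have hφ := hx₀ hmemS
    simp only at hφ
    have hφ2 : hamiltonian U ((leapfrog U h)^[T] (qq, pp)) - hamiltonian U (qq, pp) ≤ C₀ :=
      hφ.trans (le_max_left _ _)
    unfold hmcAccept
    refine le_min ?_ ?_
    · calc Real.exp (-C₀) ≤ Real.exp 0 := Real.exp_le_exp.mpr (by linarith)
        _ = 1 := Real.exp_zero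
    · exact Real.exp_le_exp.mpr (by linarith)
  -- density lower bound constant
  have hKpos : (0:ℝ) < (2 * π) ^ (-(d : ℝ) / 2) := Real.rpow_pos_of_pos (by positivity) _
  set c₀ : ℝ := (2 * π) ^ (-(d : ℝ) / 2) * Real.exp (-C₀) * Real.exp (-R^2/2) with hc₀def
  have hc₀pos : 0 < c₀ := by positivity
  set ε : ℝ := c₀ / (2 * Th^d) with hεdef
  have hεpos : 0 < ε := div_pos hc₀pos (by positivity)
  refine ⟨ε, hεpos, ?_⟩
  intro q hq A hAB hA
  have hFm : Measurable (fun p : EuclideanSpace ℝ (Fin d) =>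
      ((leapfrog U h)^[T] (q, p)).1) :=
    (hFpair.comp (continuous_const.prodMk continuous_id)).measurable
  set s : Set (EuclideanSpace ℝ (Fin d)) :=
    (fun p : EuclideanSpace ℝ (Fin d) => ((leapfrog U h)^[T] (q, p)).1) ⁻¹' A with hsdef
  have hs : MeasurableSet s := hFm hA
  have hspre : s = (fun pp => F q pp) ⁻¹' A := rfl
  -- volume comparison via the approximate-linear image bound
  have himg : (fun pp => F q pp) '' s = (fun x => F q (Th⁻¹ • x)) '' (Th • s) := by
    rw [← Set.image_smul, Set.image_image]
    simp [inv_smul_smul₀ hTh.ne']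
  have happrox : ApproximatesLinearOn (fun x => F q (Th⁻¹ • x))
      (ContinuousLinearMap.id ℝ (EuclideanSpace ℝ (Fin d))) (Th • s) δ₀ := by
    intro x hx z hz
    simp only [ContinuousLinearMap.id_apply]
    have e : Th • (Th⁻¹ • x - Th⁻¹ • z) = x - z := by
      rw [smul_sub, smul_inv_smul₀ hTh.ne', smul_inv_smul₀ hTh.ne']
    calc ‖F q (Th⁻¹ • x) - F q (Th⁻¹ • z) - (x - z)‖
        = ‖F q (Th⁻¹ • x) - F q (Th⁻¹ • z) - Th • (Th⁻¹ • x - Th⁻¹ • z)‖ := by rw [e]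
      _ ≤ C*h^2*‖Th⁻¹ • x - Th⁻¹ • z‖ := key q _ _
      _ = C*h^2*(Th⁻¹*‖x - z‖) := by
          rw [← smul_sub, smul_norm_eq _ (inv_nonneg.mpr hTh.le)]
      _ = (C*h^2*Th⁻¹)*‖x - z‖ := by ring
      _ ≤ (δ₀:ℝ)*‖x - z‖ := by
          refine mul_le_mul_of_nonneg_right ?_ (norm_nonneg _)
          calc C*h^2*Th⁻¹ ≤ ((δ₀:ℝ)*Th)*Th⁻¹ :=
                mul_le_mul_of_nonneg_right hratio (inv_nonneg.mpr hTh.le)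
            _ = (δ₀:ℝ) := by field_simp
  have hvol : volume A ≤ 2 * (ENNReal.ofReal (Th^d) * volume s) := by
    have h1 : A ⊆ (fun pp => F q pp) '' s := by
      intro y hy
      obtain ⟨pp, hpp⟩ := Fsurj q y
      exact ⟨pp, by rw [hspre, Set.mem_preimage, hpp]; exact hy, hpp⟩
    calc volume A ≤ volume ((fun pp => F q pp) '' s) := measure_mono h1
      _ = volume ((fun x => F q (Th⁻¹ • x)) '' (Th • s)) := by rw [himg]
      _ ≤ 2 * volume (Th • s) := by
          have := hδ₀ (Th • s) _ happrox
          simpa using this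
      _ = 2 * (ENNReal.ofReal (Th^d) * volume s) := by
          rw [Measure.addHaar_smul_of_nonneg volume hTh.le s, finrank_euclideanSpace_fin]
  -- density lower bound on s
  have hlower : ENNReal.ofReal c₀ * volume s ≤
      (volume.withDensity fun p => ENNReal.ofReal
        ((2 * π) ^ (-(d : ℝ) / 2) * hmcAccept U (q, p) ((leapfrog U h)^[T] (q, p)) *
          Real.exp (-‖p‖ ^ 2 / 2))) s := by
    rw [withDensity_apply _ hs, ← setLIntegral_const]
    refine setLIntegral_mono' hs ?_
    intro pp hpp
    apply ENNReal.ofReal_le_ofReal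
    have hmem : F q pp ∈ A := hpp
    have hppR : ‖pp‖ ≤ R := hradius q hq pp (hAB hmem)
    have hacc := haccept q hq pp hppR
    have hexp : Real.exp (-R^2/2) ≤ Real.exp (-‖pp‖^2/2) := by
      apply Real.exp_le_exp.mpr
      nlinarith [norm_nonneg pp]
    rw [hc₀def]
    have haccnn : (0:ℝ) ≤ Real.exp (-C₀) := (Real.exp_pos _).le
    refine mul_le_mul (mul_le_mul le_rfl hacc haccnn hKpos.le) hexp (Real.exp_pos _).le ?_
    exact mul_nonneg hKpos.le (haccnn.trans hacc)
  -- the withDensity part is below the full kernel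
  have hmap : (volume.withDensity fun p => ENNReal.ofReal
        ((2 * π) ^ (-(d : ℝ) / 2) * hmcAccept U (q, p) ((leapfrog U h)^[T] (q, p)) *
          Real.exp (-‖p‖ ^ 2 / 2))) s ≤ hmcP U h T q A := by
    rw [hmcP, Measure.add_apply, Measure.map_apply hFm hA]
    exact le_self_add
  -- put everything together
  have e2 : ENNReal.ofReal ε * 2 * ENNReal.ofReal (Th^d) = ENNReal.ofReal c₀ := by
    rw [show (2:ENNReal) = ENNReal.ofReal 2 from (ENNReal.ofReal_ofNat 2).symm,
      ← ENNReal.ofReal_mul hεpos.le, ← ENNReal.ofReal_mul (by positivity)]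
    congr 1
    rw [hεdef]
    field_simp
  calc ENNReal.ofReal ε * volume A
      ≤ ENNReal.ofReal ε * (2 * (ENNReal.ofReal (Th^d) * volume s)) :=
        by gcongr
    _ = ENNReal.ofReal ε * 2 * ENNReal.ofReal (Th^d) * volume s := by ring
    _ = ENNReal.ofReal c₀ * volume s := by rw [e2]
    _ ≤ _ := hlower.trans hmap
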